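/- (Necessity.) Consider a time-invariant network modeled by a digraph D = (V, E) where each normal node updates its value according to ARC-P with parameter f ∈ [0,1/2] under the f-fraction local crash adversary model. If the normal agents achieve continuous-time resilient asymptotic consensus (CTRAC) for every choice of initial values, every f-fraction local set of crash adversaries, and every admissible behavior of those adversaries, then D is f-fraction robust. -/

import Mathlib

open Finset Filter Topology MeasureTheory

namespace ARCP

variable {n : ℕ}

/-- `R` is a valid ARC-P removal of the (up to) `F` largest neighboring values. -/
def RemovalHigh (Nin : Finset (Fin n)) (v : Fin n → ℝ) (xi : ℝ) (F : ℕ)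
    (R : Finset (Fin n)) : Prop :=
  R ⊆ Nin ∧
    (((Nin.filter fun j => xi < v j).card < F ∧ R = Nin.filter fun j => xi < v j) ∨
      (F ≤ (Nin.filter fun j => xi < v j).card ∧ R.card = F ∧
        ∀ j ∈ R, ∀ k ∈ Nin \ R, v k ≤ v j))

/-- `R` is a valid ARC-P removal of the (up to) `F` smallest neighboring values. -/
def RemovalLow (Nin : Finset (Fin n)) (v : Fin n → ℝ) (xi : ℝ) (F : ℕ)
    (R : Finset (Fin n)) : Prop :=
  R ⊆ Nin ∧
    (((Nin.filter fun j => v j < xi).card < F ∧ R = Nin.filter fun j => v j < xi) ∨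
      (F ≤ (Nin.filter fun j => v j < xi).card ∧ R.card = F ∧
        ∀ j ∈ R, ∀ k ∈ Nin \ R, v j ≤ v k))

/-- `R` is a valid set of in-neighbors removed by the ARC-P rule with threshold `F`. -/
def IsARCPRemoval (Nin : Finset (Fin n)) (v : Fin n → ℝ) (xi : ℝ) (F : ℕ)
    (R : Finset (Fin n)) : Prop :=
  ∃ Rhi Rlo : Finset (Fin n),
    R = Rhi ∪ Rlo ∧ RemovalHigh Nin v xi F Rhi ∧ RemovalLow Nin v xi F Rlo

/-- The ARC-P control input: `∑_{j ∈ Nin \ R} w j * (v j - xi)`. -/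
def arcpUpdate (Nin R : Finset (Fin n)) (w : Fin n → ℝ) (v : Fin n → ℝ) (xi : ℝ) : ℝ :=
  ∑ j ∈ Nin \ R, w j * (v j - xi)

/-- `S` is a `p`-fraction edge reachable set of the digraph with in-neighborhoods `Nin`:
it contains a node `i` with `d_i > 0` and at least `⌈p ⬝ d_i⌉` in-neighbors outside `S`;
by convention, if every node of `S` has all its in-neighbors inside `S`, then `S` is
`0`-fraction edge reachable. -/
def FracEdgeReachable (Nin : Fin n → Finset (Fin n)) (p : ℝ) (S : Finset (Fin n)) : Prop :=
  (∃ i ∈ S, 0 < (Nin i).card ∧ ⌈p * (((Nin i).card : ℝ))⌉₊ ≤ ((Nin i) \ S).card) ∨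
    (p = 0 ∧ ∀ i ∈ S, ((Nin i) \ S).card = 0)

/-- The digraph with in-neighborhoods `Nin` is `p`-fraction robust: for every pair of
nonempty, disjoint subsets of nodes, at least one of them is `p`-fraction edge reachable. -/
def FracRobust (Nin : Fin n → Finset (Fin n)) (p : ℝ) : Prop :=
  ∀ S₁ S₂ : Finset (Fin n), S₁.Nonempty → S₂.Nonempty → Disjoint S₁ S₂ →
    FracEdgeReachable Nin p S₁ ∨ FracEdgeReachable Nin p S₂

end ARCP

section Aux

variable {n : ℕ}

lemma removalHigh_filter (Nin : Finset (Fin n)) (v : Fin n → ℝ) (xi : ℝ) (F : ℕ)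
    (h : (Nin.filter fun j => xi < v j).card ≤ F) :
    ARCP.RemovalHigh Nin v xi F (Nin.filter fun j => xi < v j) := by
  refine ⟨Finset.filter_subset _ _, ?_⟩
  rcases h.lt_or_eq with h' | h'
  · exact Or.inl ⟨h', rfl⟩
  · refine Or.inr ⟨h'.ge, h', ?_⟩
    intro j hj k hk
    rw [Finset.mem_filter] at hj
    rw [Finset.mem_sdiff] at hk
    have hk' : ¬ xi < v k := fun hc => hk.2 (Finset.mem_filter.mpr ⟨hk.1, hc⟩)
    exact le_of_lt (lt_of_le_of_lt (not_lt.mp hk') hj.2)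

lemma removalLow_filter (Nin : Finset (Fin n)) (v : Fin n → ℝ) (xi : ℝ) (F : ℕ)
    (h : (Nin.filter fun j => v j < xi).card ≤ F) :
    ARCP.RemovalLow Nin v xi F (Nin.filter fun j => v j < xi) := by
  refine ⟨Finset.filter_subset _ _, ?_⟩
  rcases h.lt_or_eq with h' | h'
  · exact Or.inl ⟨h', rfl⟩
  · refine Or.inr ⟨h'.ge, h', ?_⟩
    intro j hj k hk
    rw [Finset.mem_filter] at hj
    rw [Finset.mem_sdiff] at hk
    have hk' : ¬ v k < xi := fun hc => hk.2 (Finset.mem_filter.mpr ⟨hk.1, hc⟩)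
    exact le_of_lt (lt_of_lt_of_le hj.2 (not_lt.mp hk'))

lemma exists_removalHigh (Nin : Finset (Fin n)) (v : Fin n → ℝ) (xi : ℝ) (F : ℕ)
    (hmax : ∀ j ∈ Nin, xi < v j → ∀ k ∈ Nin, v k ≤ v j) :
    ∃ R, ARCP.RemovalHigh Nin v xi F R := by
  by_cases h : (Nin.filter fun j => xi < v j).card < F
  · exact ⟨_, Finset.filter_subset _ _, Or.inl ⟨h, rfl⟩⟩
  · push_neg at h
    obtain ⟨R, hR, hcard⟩ := Finset.exists_subset_card_eq h
    refine ⟨R, hR.trans (Finset.filter_subset _ _), Or.inr ⟨h, hcard, ?_⟩⟩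
    intro j hj k hk
    have hj' := hR hj
    rw [Finset.mem_filter] at hj'
    exact hmax j hj'.1 hj'.2 k (Finset.mem_sdiff.mp hk).1

lemma exists_removalLow (Nin : Finset (Fin n)) (v : Fin n → ℝ) (xi : ℝ) (F : ℕ)
    (hmin : ∀ j ∈ Nin, v j < xi → ∀ k ∈ Nin, v j ≤ v k) :
    ∃ R, ARCP.RemovalLow Nin v xi F R := by
  by_cases h : (Nin.filter fun j => v j < xi).card < F
  · exact ⟨_, Finset.filter_subset _ _, Or.inl ⟨h, rfl⟩⟩
  · push_neg at h
    obtain ⟨R, hR, hcard⟩ := Finset.exists_subset_card_eq h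
    refine ⟨R, hR.trans (Finset.filter_subset _ _), Or.inr ⟨h, hcard, ?_⟩⟩
    intro j hj k hk
    have hj' := hR hj
    rw [Finset.mem_filter] at hj'
    exact hmin j hj'.1 hj'.2 k (Finset.mem_sdiff.mp hk).1

end Aux

/-- Theorem 1 of the paper, necessity: in a time-invariant network where
every normal node runs ARC-P with parameter `f ∈ [0,1/2]`, if CTRAC is achieved for every
partition into normal nodes and an `f`-fraction local set of crash adversaries, every
choice of initial values, every admissible removal choice, and every admissible crash
behavior, then the digraph is `f`-fraction robust. -/
theorem stmt3 {n : ℕ}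
    (Nin : Fin n → Finset (Fin n)) (f : ℝ) (hf : f ∈ Set.Icc (0 : ℝ) (1 / 2))
    (α β : ℝ) (hα : 0 < α) (hαβ : α ≤ β)
    (w : ℝ → Fin n → Fin n → ℝ)
    (hw : ∀ t : ℝ, ∀ i : Fin n, ∀ j ∈ Nin i, α ≤ w t j i ∧ w t j i ≤ β)
    (H : ∀ (Normal : Finset (Fin n)) (hNe : Normal.Nonempty),
      -- the set of adversaries (the non-normal agents) is f-fraction local
      (∀ i ∈ Normal, ((Nin i).filter fun j => j ∉ Normal).card
          ≤ ⌊f * (((Nin i).card : ℝ))⌋₊) →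
      ∀ (x u : Fin n → ℝ → ℝ) (R : ℝ → Fin n → Finset (Fin n)),
        -- valid ARC-P removal sets (all agents convey their own state in the crash model)
        (∀ t : ℝ, ∀ i : Fin n, ARCP.IsARCPRemoval (Nin i) (fun j => x j t) (x i t)
            (⌊f * (((Nin i).card : ℝ))⌋₊) (R t i)) →
        -- Carathéodory solutions (integral form, with locally integrable inputs)
        (∀ i : Fin n, ∀ t : ℝ, 0 ≤ t → IntervalIntegrable (u i) volume 0 t) →
        (∀ i : Fin n, ∀ t : ℝ, 0 ≤ t → x i t = x i 0 + ∫ s in (0 : ℝ)..t, u i s) →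
        -- normal agents follow ARC-P with parameter f for all time
        (∀ i ∈ Normal, ∀ t : ℝ, 0 ≤ t →
          u i t = ARCP.arcpUpdate (Nin i) (R t i) (fun j => w t j i)
            (fun j => x j t) (x i t)) →
        -- crash adversaries: behave normally until a time t_k of their choosing,
        -- then stop changing their state
        (∀ k : Fin n, k ∉ Normal → ∃ tk : ℝ, 0 ≤ tk ∧
          (∀ t : ℝ, 0 ≤ t → t < tk →
            u k t = ARCP.arcpUpdate (Nin k) (R t k) (fun j => w t j k)
              (fun j => x j t) (x k t)) ∧
          (∀ t : ℝ, tk ≤ t → u k t = 0)) →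
        -- CTRAC: agreement and safety
        (∃ L : ℝ, ∀ i ∈ Normal, Tendsto (x i) atTop (𝓝 L)) ∧
        (∀ i ∈ Normal, ∀ t : ℝ, 0 ≤ t →
          x i t ∈ Set.Icc (Normal.inf' hNe fun j => x j 0)
            (Normal.sup' hNe fun j => x j 0))) :
    ARCP.FracRobust Nin f := by
  obtain ⟨hf0, hf2⟩ := hf
  rcases eq_or_lt_of_le hf0 with hf0' | hfpos
  · -- f = 0 : every nonempty set is 0-fraction edge reachable
    intro S₁ S₂ hS₁ hS₂ _
    left
    by_cases hd : ∃ i ∈ S₁, 0 < (Nin i).card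
    · obtain ⟨i, hi, hdi⟩ := hd
      exact Or.inl ⟨i, hi, hdi, by simp [← hf0']⟩
    · push_neg at hd
      refine Or.inr ⟨hf0'.symm, fun i hi => ?_⟩
      have : (Nin i).card = 0 := Nat.le_zero.mp (hd i hi)
      have h0 : ((Nin i) \ S₁).card ≤ (Nin i).card := Finset.card_le_card (Finset.sdiff_subset)
      omega
  · -- f > 0
    intro S₁ S₂ hS₁ hS₂ hdisj
    by_contra hcon
    push_neg at hcon
    obtain ⟨hr1, hr2⟩ := hcon
    -- counting: non-reachable sets have few external in-neighbors
    have hcount : ∀ S : Finset (Fin n), ¬ ARCP.FracEdgeReachable Nin f S →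
        ∀ i ∈ S, ((Nin i) \ S).card ≤ ⌊f * (((Nin i).card : ℝ))⌋₊ := by
      intro S hS i hiS
      rw [ARCP.FracEdgeReachable] at hS
      push_neg at hS
      obtain ⟨h1, _⟩ := hS
      by_cases hd : (Nin i).card = 0
      · have : Nin i = ∅ := Finset.card_eq_zero.mp hd
        simp [this]
      · have hlt := h1 i hiS (Nat.pos_of_ne_zero hd)
        have hc1 : ⌈f * (((Nin i).card : ℝ))⌉₊ ≤ ⌊f * (((Nin i).card : ℝ))⌋₊ + 1 :=
          Nat.ceil_le_floor_add_one _
        omega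
    have hc1 := hcount S₁ hr1
    have hc2 := hcount S₂ hr2
    clear hcount hr1 hr2
    -- the frozen configuration
    set F : Fin n → ℕ := fun i => ⌊f * (((Nin i).card : ℝ))⌋₊ with hF
    set c : Fin n → ℝ := fun i => if i ∈ S₁ then 0 else if i ∈ S₂ then 1 else 1/2 with hc
    have hc01 : ∀ i, 0 ≤ c i ∧ c i ≤ 1 := by
      intro i; simp only [hc]
      split <;> [norm_num; (split <;> norm_num)]
    have hcS₁ : ∀ i ∈ S₁, c i = 0 := by intro i hi; simp [hc, hi]
    have hcS₂ : ∀ i ∈ S₂, c i = 1 := by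
      intro i hi
      have : i ∉ S₁ := Finset.disjoint_right.mp hdisj hi
      simp [hc, hi, this]
    have hcA : ∀ i, i ∉ S₁ → i ∉ S₂ → c i = 1/2 := by
      intro i h1 h2; simp [hc, h1, h2]
    -- removal sets
    have hrem : ∀ i : Fin n, ∃ R, ARCP.IsARCPRemoval (Nin i) c (c i) (F i) R ∧
        (i ∈ S₁ ∪ S₂ → ∀ j ∈ Nin i \ R, c j = c i) := by
      intro i
      by_cases hi : i ∈ S₁ ∪ S₂
      · have hhi : ((Nin i).filter fun j => c i < c j).card ≤ F i := by
          rcases Finset.mem_union.mp hi with hi1 | hi2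
          · refine le_trans (Finset.card_le_card ?_) (hc1 i hi1)
            intro j hj
            rw [Finset.mem_filter] at hj
            refine Finset.mem_sdiff.mpr ⟨hj.1, fun hjS => ?_⟩
            rw [hcS₁ i hi1, hcS₁ j hjS] at hj
            exact lt_irrefl _ hj.2
          · have : (Nin i).filter (fun j => c i < c j) = ∅ := by
              refine Finset.filter_eq_empty_iff.mpr fun j _ => ?_
              rw [hcS₂ i hi2]; exact not_lt.mpr (hc01 j).2
            simp [this]
        have hlo : ((Nin i).filter fun j => c j < c i).card ≤ F i := by
          rcases Finset.mem_union.mp hi with hi1 | hi2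
          · have : (Nin i).filter (fun j => c j < c i) = ∅ := by
              refine Finset.filter_eq_empty_iff.mpr fun j _ => ?_
              rw [hcS₁ i hi1]; exact not_lt.mpr (hc01 j).1
            simp [this]
          · refine le_trans (Finset.card_le_card ?_) (hc2 i hi2)
            intro j hj
            rw [Finset.mem_filter] at hj
            refine Finset.mem_sdiff.mpr ⟨hj.1, fun hjS => ?_⟩
            rw [hcS₂ i hi2, hcS₂ j hjS] at hj
            exact lt_irrefl _ hj.2
        refine ⟨_, ⟨_, _, rfl, removalHigh_filter _ _ _ _ hhi, removalLow_filter _ _ _ _ hlo⟩,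
          fun _ j hj => ?_⟩
        rw [Finset.mem_sdiff, Finset.mem_union, Finset.mem_filter, Finset.mem_filter] at hj
        push_neg at hj
        exact le_antisymm (hj.2.1 hj.1) (hj.2.2 hj.1)
      · rw [Finset.mem_union] at hi
        push_neg at hi
        have hci : c i = 1/2 := hcA i hi.1 hi.2
        have hmax : ∀ j ∈ Nin i, c i < c j → ∀ k ∈ Nin i, c k ≤ c j := by
          intro j _ hj k _
          have : c j = 1 := by
            rw [hci] at hj
            by_cases hj1 : j ∈ S₁
            · rw [hcS₁ j hj1] at hj; norm_num at hj
            · by_cases hj2 : j ∈ S₂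
              · exact hcS₂ j hj2
              · rw [hcA j hj1 hj2] at hj; norm_num at hj
          rw [this]; exact (hc01 k).2
        have hmin : ∀ j ∈ Nin i, c j < c i → ∀ k ∈ Nin i, c j ≤ c k := by
          intro j _ hj k _
          have : c j = 0 := by
            rw [hci] at hj
            by_cases hj1 : j ∈ S₁
            · exact hcS₁ j hj1
            · by_cases hj2 : j ∈ S₂
              · rw [hcS₂ j hj2] at hj; norm_num at hj
              · rw [hcA j hj1 hj2] at hj; norm_num at hj
          rw [this]; exact (hc01 k).1
        obtain ⟨Rh, hRh⟩ := exists_removalHigh (Nin i) c (c i) (F i) hmax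
        obtain ⟨Rl, hRl⟩ := exists_removalLow (Nin i) c (c i) (F i) hmin
        exact ⟨Rh ∪ Rl, ⟨Rh, Rl, rfl, hRh, hRl⟩, fun h => absurd h (by
          rw [Finset.mem_union]; push_neg; exact hi)⟩
    choose Rf hRf1 hRf2 using hrem
    -- Normal = S₁ ∪ S₂ is nonempty
    have hNe : (S₁ ∪ S₂).Nonempty := hS₁.mono Finset.subset_union_left
    -- f-fraction locality
    have hlocal : ∀ i ∈ S₁ ∪ S₂, ((Nin i).filter fun j => j ∉ S₁ ∪ S₂).card
        ≤ ⌊f * (((Nin i).card : ℝ))⌋₊ := by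
      intro i hi
      rcases Finset.mem_union.mp hi with hi1 | hi2
      · refine le_trans (Finset.card_le_card ?_) (hc1 i hi1)
        intro j hj
        rw [Finset.mem_filter] at hj
        exact Finset.mem_sdiff.mpr ⟨hj.1, fun h => hj.2 (Finset.mem_union_left _ h)⟩
      · refine le_trans (Finset.card_le_card ?_) (hc2 i hi2)
        intro j hj
        rw [Finset.mem_filter] at hj
        exact Finset.mem_sdiff.mpr ⟨hj.1, fun h => hj.2 (Finset.mem_union_right _ h)⟩
    -- apply the CTRAC hypothesis to the frozen solution
    obtain ⟨⟨L, hL⟩, -⟩ := H (S₁ ∪ S₂) hNe hlocal (fun i _ => c i) (fun _ _ => 0)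
      (fun _ i => Rf i)
      (fun t i => hRf1 i)
      (fun i t _ => intervalIntegrable_const)
      (fun i t _ => by simp)
      (fun i hi t _ => by
        rw [ARCP.arcpUpdate]
        refine (Finset.sum_eq_zero fun j hj => ?_).symm
        show w t j i * (c j - c i) = 0
        rw [hRf2 i hi j hj]
        ring)
      (fun k hk => ⟨0, le_refl 0, fun t ht ht' => absurd (lt_of_le_of_lt ht ht') (lt_irrefl 0),
        fun t _ => rfl⟩)
    obtain ⟨i₁, hi₁⟩ := hS₁
    obtain ⟨i₂, hi₂⟩ := hS₂
    have hL1 : L = c i₁ :=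
      tendsto_nhds_unique (hL i₁ (Finset.mem_union_left _ hi₁)) tendsto_const_nhds
    have hL2 : L = c i₂ :=
      tendsto_nhds_unique (hL i₂ (Finset.mem_union_right _ hi₂)) tendsto_const_nhds
    rw [hcS₁ i₁ hi₁] at hL1
    rw [hcS₂ i₂ hi₂] at hL2
    rw [hL1] at hL2
    norm_num at hL2
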